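/- Let B ∈ ℂ^{d×d} satisfy B*·P₁·B = P₁, let V := Q₊ + Q₋·B (invertible) and U := (Q₊·B + Q₋)·V⁻¹ (unitary). Then for every y ∈ ℂ^d one has ‖y‖² ≤ ‖V‖²·(n₊(y)² + n₋(Uy)²) and ‖y‖² ≤ ‖B⁻¹‖²·‖V‖²·(n₊(Uy)² + n₋(y)²), where ‖·‖ denotes the Euclidean norm on ℂ^d and the spectral norm on matrices. -/

import Mathlib

open Matrix

noncomputable section

/-- The spectral (ℓ²-operator) norm of a square complex matrix. -/
def specNormC {d : ℕ} (A : Matrix (Fin d) (Fin d) ℂ) : ℝ :=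
  ‖Matrix.toEuclideanCLM (𝕜 := ℂ) A‖

/-- The Euclidean norm of a vector in `ℂ^d`. -/
def euclNormC {d : ℕ} (x : Fin d → ℂ) : ℝ :=
  ‖(WithLp.equiv 2 (Fin d → ℂ)).symm x‖

section Aux

variable {n : Type*} [Fintype n] [DecidableEq n]

/-- If `X` commutes with `A * A` for a positive semidefinite real matrix `A`,
then `X` commutes with `A`. -/
lemma commute_of_commute_sq {A X : Matrix n n ℝ}
    (hA : A.PosSemidef) (h : Commute X (A * A)) : Commute X A := by
  have hH := hA.1
  set U : Matrix n n ℝ := (hH.eigenvectorUnitary : Matrix n n ℝ) with hUdef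
  set f : n → ℝ := RCLike.ofReal ∘ hH.eigenvalues with hfdef
  set D : Matrix n n ℝ := diagonal f with hDdef
  have hspec : A = U * D * star U := hH.spectral_theorem
  have hU1 : star U * U = 1 := (Matrix.mem_unitaryGroup_iff').mp hH.eigenvectorUnitary.2
  have hU2 : U * star U = 1 := (Matrix.mem_unitaryGroup_iff).mp hH.eigenvectorUnitary.2
  have hAA : A * A = U * (D * D) * star U := by
    rw [hspec]
    calc U * D * star U * (U * D * star U)
        = U * D * (star U * U) * D * star U := by noncomm_ring
      _ = U * (D * D) * star U := by rw [hU1]; noncomm_ring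
  set Y : Matrix n n ℝ := star U * X * U with hYdef
  have hXY : X = U * Y * star U := by
    rw [hYdef]
    calc X = 1 * X * 1 := by noncomm_ring
      _ = (U * star U) * X * (U * star U) := by rw [hU2]
      _ = U * (star U * X * U) * star U := by noncomm_ring
  have hYD2 : Y * (D * D) = (D * D) * Y := by
    have h1 : star U * (X * (A * A)) * U = star U * ((A * A) * X) * U := by rw [h.eq]
    rw [hAA] at h1
    calc Y * (D * D)
        = star U * X * (U * (D * D) * (star U * U)) := by rw [hU1, hYdef]; noncomm_ring
      _ = star U * (X * (U * (D * D) * star U)) * U := by noncomm_ring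
      _ = star U * ((U * (D * D) * star U) * X) * U := h1
      _ = ((star U * U) * (D * D)) * (star U * X * U) := by noncomm_ring
      _ = (D * D) * Y := by rw [hU1, hYdef]; noncomm_ring
  have hYD : Y * D = D * Y := by
    ext i j
    have h2 := Matrix.ext_iff.2 hYD2 i j
    rw [hDdef] at h2 ⊢
    rw [diagonal_mul_diagonal] at h2
    rw [mul_diagonal, diagonal_mul] at h2 ⊢
    have hnn : ∀ k, (0:ℝ) ≤ f k := by
      intro k
      exact hA.eigenvalues_nonneg k
    rcases eq_or_ne (Y i j) 0 with h0 | h0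
    · simp [h0]
    · have hb : f j * f j = f i * f i :=
        mul_left_cancel₀ h0 (by linear_combination h2)
      have hfe : f j = f i := by
        have h4 : Real.sqrt (f j ^ 2) = Real.sqrt (f i ^ 2) := by rw [sq, sq, hb]
        rwa [Real.sqrt_sq (hnn j), Real.sqrt_sq (hnn i)] at h4
      rw [hfe]; ring
  show X * A = A * X
  rw [hXY, hspec]
  calc U * Y * star U * (U * D * star U)
      = U * Y * (star U * U) * D * star U := by noncomm_ring
    _ = U * (Y * D) * star U := by rw [hU1]; noncomm_ring
    _ = U * (D * Y) * star U := by rw [hYD]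
    _ = U * D * (star U * U) * Y * star U := by rw [hU1]; noncomm_ring
    _ = U * D * star U * (U * Y * star U) := by noncomm_ring

lemma commute_inv_right {K : Type*} [Field K] {A X : Matrix n n K}
    (h : Commute X A) (hA : IsUnit A.det) : Commute X A⁻¹ := by
  have h1 : A⁻¹ * A = 1 := nonsing_inv_mul _ hA
  have h2 : A * A⁻¹ = 1 := mul_nonsing_inv _ hA
  show X * A⁻¹ = A⁻¹ * X
  calc X * A⁻¹ = (A⁻¹ * A) * (X * A⁻¹) := by rw [h1, one_mul]
    _ = A⁻¹ * (A * X) * A⁻¹ := by noncomm_ring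
    _ = A⁻¹ * (X * A) * A⁻¹ := by rw [← h.eq]
    _ = A⁻¹ * X * (A * A⁻¹) := by noncomm_ring
    _ = A⁻¹ * X := by rw [h2, mul_one]

end Aux

section Aux2

variable {d : ℕ}

/-- Lift a real matrix to a complex matrix. -/
abbrev cM (M : Matrix (Fin d) (Fin d) ℝ) : Matrix (Fin d) (Fin d) ℂ :=
  M.map Complex.ofReal

lemma cM_mul (M N : Matrix (Fin d) (Fin d) ℝ) : cM (M * N) = cM M * cM N :=
  Matrix.map_mul (f := Complex.ofRealHom)

lemma cM_add (M N : Matrix (Fin d) (Fin d) ℝ) : cM (M + N) = cM M + cM N := by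
  ext i j; simp

lemma cM_sub (M N : Matrix (Fin d) (Fin d) ℝ) : cM (M - N) = cM M - cM N := by
  ext i j; simp

lemma cM_neg (M : Matrix (Fin d) (Fin d) ℝ) : cM (-M) = -(cM M) := by
  ext i j; simp

lemma cM_one : cM (1 : Matrix (Fin d) (Fin d) ℝ) = 1 := by
  ext i j; by_cases h : i = j <;> simp [Matrix.one_apply, h]

lemma cM_zero : cM (0 : Matrix (Fin d) (Fin d) ℝ) = 0 := by
  ext i j; simp

lemma cM_smul (r : ℝ) (M : Matrix (Fin d) (Fin d) ℝ) :
    cM (r • M) = (r : ℂ) • cM M := by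
  ext i j; simp

lemma cM_herm {M : Matrix (Fin d) (Fin d) ℝ} (h : M.IsHermitian) :
    (cM M)ᴴ = cM M := by
  ext i j
  simp only [conjTranspose_apply, map_apply, Complex.star_def, Complex.conj_ofReal]
  exact congrArg _ (Matrix.ext_iff.2 h i j)

lemma euclNormC_nonneg (v : Fin d → ℂ) : 0 ≤ euclNormC v := norm_nonneg _

lemma specNormC_nonneg (A : Matrix (Fin d) (Fin d) ℂ) : 0 ≤ specNormC A := norm_nonneg _

lemma euclNormC_eq_zero {v : Fin d → ℂ} (h : euclNormC v = 0) : v = 0 := by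
  rw [euclNormC, norm_eq_zero] at h
  have := congrArg (WithLp.equiv 2 (Fin d → ℂ)) h
  simpa using this

lemma dot_star_self (v : Fin d → ℂ) :
    star v ⬝ᵥ v = ((euclNormC v ^ 2 : ℝ) : ℂ) := by
  have h1 : euclNormC v ^ 2 = ∑ i, ‖v i‖ ^ 2 := by
    rw [euclNormC, EuclideanSpace.norm_eq, Real.sq_sqrt (by positivity)]
    rfl
  rw [h1]
  simp only [dotProduct, Pi.star_apply, Complex.star_def]
  push_cast
  congr 1
  ext i
  rw [← Complex.normSq_eq_conj_mul_self, Complex.normSq_eq_norm_sq]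
  norm_num

lemma dot_self_zero {v : Fin d → ℂ} (h : star v ⬝ᵥ v = 0) : v = 0 := by
  rw [dot_star_self] at h
  have h2 : euclNormC v ^ 2 = 0 := by exact_mod_cast h
  exact euclNormC_eq_zero (by nlinarith [euclNormC_nonneg v])

lemma mulVec_norm_le (A : Matrix (Fin d) (Fin d) ℂ) (v : Fin d → ℂ) :
    euclNormC (A *ᵥ v) ≤ specNormC A * euclNormC v := by
  have h := (Matrix.toEuclideanCLM (𝕜 := ℂ) A).le_opNorm
    ((WithLp.equiv 2 (Fin d → ℂ)).symm v)
  exact h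

lemma dot_sandwich (A M : Matrix (Fin d) (Fin d) ℂ) (x : Fin d → ℂ) :
    star (A *ᵥ x) ⬝ᵥ M *ᵥ (A *ᵥ x) = star x ⬝ᵥ (Aᴴ * M * A) *ᵥ x := by
  rw [star_mulVec, mulVec_mulVec, dotProduct_mulVec, vecMul_vecMul,
    dotProduct_mulVec, mul_assoc]

/-- `star z ⬝ᵥ (cM (Q*Q)) *ᵥ z` as a norm, for `Q` hermitian. -/
lemma dot_sq_herm {Q : Matrix (Fin d) (Fin d) ℝ} (hQ : Q.IsHermitian) (z : Fin d → ℂ) :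
    star z ⬝ᵥ cM (Q * Q) *ᵥ z = star (cM Q *ᵥ z) ⬝ᵥ (cM Q *ᵥ z) := by
  have e := dot_sandwich (cM Q) 1 z
  rw [one_mulVec, mul_one, cM_herm hQ, ← cM_mul] at e
  exact e.symm

end Aux2

set_option maxHeartbeats 2000000 in
/-- **Proposition 5.5 (c).** With `B* P₁ B = P₁`, `V := Q₊ + Q₋ B` and
`U := (Q₊ B + Q₋) V⁻¹`, one has for all `y ∈ ℂ^d`:
`‖y‖² ≤ ‖V‖² (n₊(y)² + n₋(Uy)²)` and `‖y‖² ≤ ‖B⁻¹‖² ‖V‖² (n₊(Uy)² + n₋(y)²)`,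
where `n₊(z)² = ⟨P₁⁻¹P₊ z, z⟩` and `n₋(z)² = −⟨P₁⁻¹P₋ z, z⟩`. -/
theorem stmt_10 {d : ℕ} (P1 absP1 Qp Qm Pp Pm : Matrix (Fin d) (Fin d) ℝ)
    (hP1symm : P1.IsSymm) (hP1inv : IsUnit P1.det)
    (habs : absP1.PosDef) (habs2 : absP1 ^ 2 = P1 ^ 2)
    (hQp : Qp.PosSemidef) (hQp2 : Qp ^ 2 = (2 : ℝ)⁻¹ • (absP1 + P1))
    (hQm : Qm.PosSemidef) (hQm2 : Qm ^ 2 = (2 : ℝ)⁻¹ • (absP1 - P1))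
    (hPp : Pp = (2 : ℝ)⁻¹ • ((1 : Matrix (Fin d) (Fin d) ℝ) + absP1⁻¹ * P1))
    (hPm : Pm = (2 : ℝ)⁻¹ • ((1 : Matrix (Fin d) (Fin d) ℝ) - absP1⁻¹ * P1))
    (B : Matrix (Fin d) (Fin d) ℂ)
    (hB : Bᴴ * (P1.map Complex.ofReal) * B = P1.map Complex.ofReal)
    (V U : Matrix (Fin d) (Fin d) ℂ)
    (hV : V = Qp.map Complex.ofReal + (Qm.map Complex.ofReal) * B)
    (hU : U = (Qp.map Complex.ofReal * B + Qm.map Complex.ofReal) * V⁻¹)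
    -- squared `E₊`- and `E₋`-norms
    (np2 nm2 : (Fin d → ℂ) → ℝ)
    (hnp2 : ∀ z, np2 z = (star z ⬝ᵥ ((P1.map Complex.ofReal)⁻¹ *
      Pp.map Complex.ofReal).mulVec z).re)
    (hnm2 : ∀ z, nm2 z = -(star z ⬝ᵥ ((P1.map Complex.ofReal)⁻¹ *
      Pm.map Complex.ofReal).mulVec z).re) :
    ∀ y : Fin d → ℂ,
      euclNormC y ^ 2 ≤ specNormC V ^ 2 * (np2 y + nm2 (U.mulVec y)) ∧
      euclNormC y ^ 2 ≤
        specNormC B⁻¹ ^ 2 * specNormC V ^ 2 * (np2 (U.mulVec y) + nm2 y) := by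
  -- basic facts
  have hdS : IsUnit absP1.det := isUnit_iff_ne_zero.mpr habs.det_pos.ne'
  have hSS : absP1⁻¹ * absP1 = 1 := nonsing_inv_mul _ hdS
  have hSS' : absP1 * absP1⁻¹ = 1 := mul_nonsing_inv _ hdS
  have hPPi : P1⁻¹ * P1 = 1 := nonsing_inv_mul _ hP1inv
  have habs2' : absP1 * absP1 = P1 * P1 := (sq absP1).symm.trans (habs2.trans (sq P1))
  have hQp2' : Qp * Qp = (2:ℝ)⁻¹ • (absP1 + P1) := (sq Qp).symm.trans hQp2
  have hQm2' : Qm * Qm = (2:ℝ)⁻¹ • (absP1 - P1) := (sq Qm).symm.trans hQm2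
  -- commutation relations
  have cPA : Commute P1 absP1 := commute_of_commute_sq habs.posSemidef
    (by rw [habs2']; exact (Commute.refl P1).mul_right (Commute.refl P1))
  have cPSi : Commute P1 absP1⁻¹ := commute_inv_right cPA hdS
  have cSQp : Commute absP1 Qp := commute_of_commute_sq hQp
    (by rw [hQp2']; exact ((Commute.refl absP1).add_right cPA.symm).smul_right _)
  have cPQp : Commute P1 Qp := commute_of_commute_sq hQp
    (by rw [hQp2']; exact (cPA.add_right (Commute.refl P1)).smul_right _)
  have cSQm : Commute absP1 Qm := commute_of_commute_sq hQm
    (by rw [hQm2']; exact ((Commute.refl absP1).sub_right cPA.symm).smul_right _)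
  have cPQm : Commute P1 Qm := commute_of_commute_sq hQm
    (by rw [hQm2']; exact (cPA.sub_right (Commute.refl P1)).smul_right _)
  have cQpQm : Commute Qp Qm := commute_of_commute_sq hQm
    (by rw [hQm2']; exact (cSQp.symm.sub_right cPQp.symm).smul_right _)
  have cSiQp : Commute Qp absP1⁻¹ := commute_inv_right cSQp.symm hdS
  have cSiQm : Commute Qm absP1⁻¹ := commute_inv_right cSQm.symm hdS
  have cSSi : Commute absP1 absP1⁻¹ := commute_inv_right (Commute.refl absP1) hdS
  -- the "sign" matrix J
  set J := absP1⁻¹ * P1 with hJdef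
  have hSJ : absP1 * J = P1 := by rw [hJdef, ← mul_assoc, hSS', one_mul]
  have hJJ : J * J = 1 := by
    have h1 : J * J = absP1⁻¹ * absP1⁻¹ * (P1 * P1) := by
      rw [hJdef]
      calc absP1⁻¹ * P1 * (absP1⁻¹ * P1)
          = absP1⁻¹ * (P1 * absP1⁻¹) * P1 := by noncomm_ring
        _ = absP1⁻¹ * (absP1⁻¹ * P1) * P1 := by rw [cPSi.eq]
        _ = absP1⁻¹ * absP1⁻¹ * (P1 * P1) := by noncomm_ring
    rw [h1, ← habs2']
    calc absP1⁻¹ * absP1⁻¹ * (absP1 * absP1)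
        = absP1⁻¹ * (absP1⁻¹ * absP1) * absP1 := by noncomm_ring
      _ = 1 := by rw [hSS, mul_one, hSS]
  have cQpJ : Commute Qp J := cSiQp.mul_right cPQp.symm
  have cQmJ : Commute Qm J := cSiQm.mul_right cPQm.symm
  have cSJ : Commute absP1 J := cSSi.mul_right cPA.symm
  -- projections
  have hJPp : J * Pp = Pp := by
    rw [hPp, mul_smul_comm, mul_add, mul_one, hJJ, add_comm]
  have hJPm : J * Pm = -Pm := by
    rw [hPm, mul_smul_comm, mul_sub, mul_one, hJJ, ← smul_neg, neg_sub]
  have hPpPm0 : Pp * Pm = 0 := by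
    rw [hPp, smul_mul_assoc, add_mul, one_mul, hJPm, add_neg_cancel, smul_zero]
  have hPmPp0 : Pm * Pp = 0 := by
    rw [hPm, smul_mul_assoc, sub_mul, one_mul, hJPp, sub_self, smul_zero]
  have hPp2 : Pp * Pp = Pp := by
    nth_rewrite 1 [hPp]
    rw [smul_mul_assoc, add_mul, one_mul, hJPp, ← two_smul ℝ, smul_smul]
    norm_num
  have hPm2 : Pm * Pm = Pm := by
    nth_rewrite 1 [hPm]
    rw [smul_mul_assoc, sub_mul, one_mul, hJPm, sub_neg_eq_add, ← two_smul ℝ, smul_smul]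
    norm_num
  have hPpPm1 : Pp + Pm = 1 := by rw [hPp, hPm]; module
  have hQp2S : Qp * Qp = absP1 * Pp := by
    rw [hQp2', hPp, mul_smul_comm, mul_add, mul_one, hSJ]
  have hQm2S : Qm * Qm = absP1 * Pm := by
    rw [hQm2', hPm, mul_smul_comm, mul_sub, mul_one, hSJ]
  have cQpPp : Commute Qp Pp := by
    rw [hPp]; exact ((Commute.one_right _).add_right cQpJ).smul_right _
  have cQmPp : Commute Qm Pp := by
    rw [hPp]; exact ((Commute.one_right _).add_right cQmJ).smul_right _
  have cQpPm : Commute Qp Pm := by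
    rw [hPm]; exact ((Commute.one_right _).sub_right cQpJ).smul_right _
  have cQmPm : Commute Qm Pm := by
    rw [hPm]; exact ((Commute.one_right _).sub_right cQmJ).smul_right _
  have cSPp : Commute absP1 Pp := by
    rw [hPp]; exact ((Commute.one_right _).add_right cSJ).smul_right _
  have cSPm : Commute absP1 Pm := by
    rw [hPm]; exact ((Commute.one_right _).sub_right cSJ).smul_right _
  -- hermitian facts
  have hP1H : P1.IsHermitian := by
    ext i j
    rw [conjTranspose_apply, star_trivial]
    have := Matrix.ext_iff.2 hP1symm.eq i j
    rwa [transpose_apply] at this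
  have hJH : J.IsHermitian := by
    show Jᴴ = J
    rw [hJdef, conjTranspose_mul, conjTranspose_nonsing_inv, hP1H.eq, habs.1.eq, ← cPSi.eq]
  have hPpH : Pp.IsHermitian := by
    show Ppᴴ = Pp
    rw [hPp, conjTranspose_smul, conjTranspose_add, conjTranspose_one, hJH.eq, star_trivial]
  have hPmH : Pm.IsHermitian := by
    show Pmᴴ = Pm
    rw [hPm, conjTranspose_smul, conjTranspose_sub, conjTranspose_one, hJH.eq, star_trivial]
  -- products of projections with square roots
  have hPmQp0 : Pm * Qp = 0 := by
    have h1 : (Pm * Qp)ᴴ * (Pm * Qp) = 0 := by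
      rw [conjTranspose_mul, hQp.1.eq, hPmH.eq]
      calc Qp * Pm * (Pm * Qp)
          = Pm * Qp * (Pm * Qp) := by rw [cQpPm.eq]
        _ = Pm * (Qp * Pm) * Qp := by noncomm_ring
        _ = Pm * (Pm * Qp) * Qp := by rw [cQpPm.eq]
        _ = Pm * Pm * (Qp * Qp) := by noncomm_ring
        _ = Pm * (absP1 * Pp) := by rw [hPm2, hQp2S]
        _ = absP1 * (Pm * Pp) := by rw [← mul_assoc, ← cSPm.eq, mul_assoc]
        _ = 0 := by rw [hPmPp0, mul_zero]
    exact conjTranspose_mul_self_eq_zero.mp h1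
  have hPpQm0 : Pp * Qm = 0 := by
    have h1 : (Pp * Qm)ᴴ * (Pp * Qm) = 0 := by
      rw [conjTranspose_mul, hQm.1.eq, hPpH.eq]
      calc Qm * Pp * (Pp * Qm)
          = Pp * Qm * (Pp * Qm) := by rw [cQmPp.eq]
        _ = Pp * (Qm * Pp) * Qm := by noncomm_ring
        _ = Pp * (Pp * Qm) * Qm := by rw [cQmPp.eq]
        _ = Pp * Pp * (Qm * Qm) := by noncomm_ring
        _ = Pp * (absP1 * Pm) := by rw [hPp2, hQm2S]
        _ = absP1 * (Pp * Pm) := by rw [← mul_assoc, ← cSPp.eq, mul_assoc]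
        _ = 0 := by rw [hPpPm0, mul_zero]
    exact conjTranspose_mul_self_eq_zero.mp h1
  have hPpQp : Pp * Qp = Qp := by
    have hPp1 : Pp = 1 - Pm := by rw [← hPpPm1]; noncomm_ring
    rw [hPp1, sub_mul, one_mul, hPmQp0, sub_zero]
  have hPmQm : Pm * Qm = Qm := by
    have hPm1 : Pm = 1 - Pp := by rw [← hPpPm1]; noncomm_ring
    rw [hPm1, sub_mul, one_mul, hPpQm0, sub_zero]
  have hQpQm0 : Qp * Qm = 0 := by
    have h1 : (Qp * Qm)ᴴ * (Qp * Qm) = 0 := by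
      rw [conjTranspose_mul, hQp.1.eq, hQm.1.eq]
      calc Qm * Qp * (Qp * Qm)
          = Qm * (Qp * Qp) * Qm := by noncomm_ring
        _ = (Qp * Qp) * (Qm * Qm) := by
            rw [(cQpQm.symm.mul_right cQpQm.symm).eq]; noncomm_ring
        _ = absP1 * Pp * (absP1 * Pm) := by rw [hQp2S, hQm2S]
        _ = absP1 * (Pp * absP1) * Pm := by noncomm_ring
        _ = absP1 * (absP1 * Pp) * Pm := by rw [cSPp.eq]
        _ = absP1 * absP1 * (Pp * Pm) := by noncomm_ring
        _ = 0 := by rw [hPpPm0, mul_zero]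
    exact conjTranspose_mul_self_eq_zero.mp h1
  have hQmQp0 : Qm * Qp = 0 := by rw [← cQpQm.eq, hQpQm0]
  -- the sandwich pieces (real)
  have mA : (absP1⁻¹ * Pp) * Qp = absP1⁻¹ * Qp := by rw [mul_assoc, hPpQp]
  have mB : (absP1⁻¹ * Pp) * Qm = 0 := by rw [mul_assoc, hPpQm0, mul_zero]
  have mC : (absP1⁻¹ * Pm) * Qm = absP1⁻¹ * Qm := by rw [mul_assoc, hPmQm]
  have mD : (absP1⁻¹ * Pm) * Qp = 0 := by rw [mul_assoc, hPmQp0, mul_zero]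
  have nA : Qp * (absP1⁻¹ * Qp) = Pp := by
    calc Qp * (absP1⁻¹ * Qp) = absP1⁻¹ * (Qp * Qp) := by rw [← mul_assoc, cSiQp.eq, mul_assoc]
      _ = absP1⁻¹ * absP1 * Pp := by rw [hQp2S, ← mul_assoc]
      _ = Pp := by rw [hSS, one_mul]
  have nB : Qm * (absP1⁻¹ * Qp) = 0 := by
    calc Qm * (absP1⁻¹ * Qp) = absP1⁻¹ * (Qm * Qp) := by rw [← mul_assoc, cSiQm.eq, mul_assoc]
      _ = 0 := by rw [hQmQp0, mul_zero]
  have nC : Qm * (absP1⁻¹ * Qm) = Pm := by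
    calc Qm * (absP1⁻¹ * Qm) = absP1⁻¹ * (Qm * Qm) := by rw [← mul_assoc, cSiQm.eq, mul_assoc]
      _ = absP1⁻¹ * absP1 * Pm := by rw [hQm2S, ← mul_assoc]
      _ = Pm := by rw [hSS, one_mul]
  have nD : Qp * (absP1⁻¹ * Qm) = 0 := by
    calc Qp * (absP1⁻¹ * Qm) = absP1⁻¹ * (Qp * Qm) := by rw [← mul_assoc, cSiQp.eq, mul_assoc]
      _ = 0 := by rw [hQpQm0, mul_zero]
  -- P1⁻¹ versus absP1⁻¹
  have hP1Pp : P1 * Pp = absP1 * Pp := by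
    rw [← hSJ, mul_assoc, hJPp]
  have hP1Pm : P1 * Pm = -(absP1 * Pm) := by
    rw [← hSJ, mul_assoc, hJPm, mul_neg]
  have uA : P1⁻¹ * Pp = absP1⁻¹ * Pp := by
    have h1 : P1 * (absP1⁻¹ * Pp) = Pp := by
      calc P1 * (absP1⁻¹ * Pp) = absP1⁻¹ * (P1 * Pp) := by rw [← mul_assoc, cPSi.eq, mul_assoc]
        _ = absP1⁻¹ * absP1 * Pp := by rw [hP1Pp, ← mul_assoc]
        _ = Pp := by rw [hSS, one_mul]
    calc P1⁻¹ * Pp = P1⁻¹ * (P1 * (absP1⁻¹ * Pp)) := by rw [h1]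
      _ = P1⁻¹ * P1 * (absP1⁻¹ * Pp) := by rw [← mul_assoc]
      _ = absP1⁻¹ * Pp := by rw [hPPi, one_mul]
  have uB : P1⁻¹ * Pm = -(absP1⁻¹ * Pm) := by
    have h1 : P1 * (-(absP1⁻¹ * Pm)) = Pm := by
      calc P1 * (-(absP1⁻¹ * Pm)) = -(absP1⁻¹ * (P1 * Pm)) := by
            rw [mul_neg, ← mul_assoc, cPSi.eq, mul_assoc]
        _ = -(absP1⁻¹ * (-(absP1 * Pm))) := by rw [hP1Pm]
        _ = absP1⁻¹ * absP1 * Pm := by rw [mul_neg, neg_neg, ← mul_assoc]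
        _ = Pm := by rw [hSS, one_mul]
    calc P1⁻¹ * Pm = P1⁻¹ * (P1 * (-(absP1⁻¹ * Pm))) := by rw [h1]
      _ = P1⁻¹ * P1 * (-(absP1⁻¹ * Pm)) := by rw [← mul_assoc]
      _ = -(absP1⁻¹ * Pm) := by rw [hPPi, one_mul]
  -- complex layer
  have hP1cInv : (cM P1)⁻¹ = cM P1⁻¹ :=
    inv_eq_left_inv (by rw [← cM_mul, hPPi, cM_one])
  have hNp : (cM P1)⁻¹ * cM Pp = cM (absP1⁻¹ * Pp) := by
    rw [hP1cInv, ← cM_mul, uA]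
  have hNm : (cM P1)⁻¹ * cM Pm = -(cM (absP1⁻¹ * Pm)) := by
    rw [hP1cInv, ← cM_mul, uB, cM_neg]
  have hcPpPm1 : cM Pp + cM Pm = 1 := by rw [← cM_add, hPpPm1, cM_one]
  -- complex pairwise products
  have eA : cM (absP1⁻¹ * Pp) * cM Qp = cM (absP1⁻¹ * Qp) := by rw [← cM_mul, mA]
  have eB : cM (absP1⁻¹ * Pp) * cM Qm = 0 := by rw [← cM_mul, mB, cM_zero]
  have eC : cM (absP1⁻¹ * Pm) * cM Qm = cM (absP1⁻¹ * Qm) := by rw [← cM_mul, mC]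
  have eD : cM (absP1⁻¹ * Pm) * cM Qp = 0 := by rw [← cM_mul, mD, cM_zero]
  have eE : cM Qp * cM (absP1⁻¹ * Qp) = cM Pp := by rw [← cM_mul, nA]
  have eF : cM Qm * cM (absP1⁻¹ * Qp) = 0 := by rw [← cM_mul, nB, cM_zero]
  have eG : cM Qm * cM (absP1⁻¹ * Qm) = cM Pm := by rw [← cM_mul, nC]
  have eH : cM Qp * cM (absP1⁻¹ * Qm) = 0 := by rw [← cM_mul, nD, cM_zero]
  -- V, W and their adjoints
  set W : Matrix (Fin d) (Fin d) ℂ := cM Qp * B + cM Qm with hWdef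
  have hVH : Vᴴ = cM Qp + Bᴴ * cM Qm := by
    rw [hV, conjTranspose_add, conjTranspose_mul, cM_herm hQp.1, cM_herm hQm.1]
  have hWH : Wᴴ = Bᴴ * cM Qp + cM Qm := by
    rw [hWdef, conjTranspose_add, conjTranspose_mul, cM_herm hQp.1, cM_herm hQm.1]
  have hMpV : cM (absP1⁻¹ * Pp) * V = cM (absP1⁻¹ * Qp) := by
    calc cM (absP1⁻¹ * Pp) * V
        = cM (absP1⁻¹ * Pp) * cM Qp + (cM (absP1⁻¹ * Pp) * cM Qm) * B := by
          rw [hV]; noncomm_ring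
      _ = cM (absP1⁻¹ * Qp) := by rw [eA, eB, zero_mul, add_zero]
  have hMmV : cM (absP1⁻¹ * Pm) * V = cM (absP1⁻¹ * Qm) * B := by
    calc cM (absP1⁻¹ * Pm) * V
        = cM (absP1⁻¹ * Pm) * cM Qp + (cM (absP1⁻¹ * Pm) * cM Qm) * B := by
          rw [hV]; noncomm_ring
      _ = cM (absP1⁻¹ * Qm) * B := by rw [eC, eD, zero_add]
  have hMpW : cM (absP1⁻¹ * Pp) * W = cM (absP1⁻¹ * Qp) * B := by
    calc cM (absP1⁻¹ * Pp) * W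
        = (cM (absP1⁻¹ * Pp) * cM Qp) * B + cM (absP1⁻¹ * Pp) * cM Qm := by
          rw [hWdef]; noncomm_ring
      _ = cM (absP1⁻¹ * Qp) * B := by rw [eA, eB, add_zero]
  have hMmW : cM (absP1⁻¹ * Pm) * W = cM (absP1⁻¹ * Qm) := by
    calc cM (absP1⁻¹ * Pm) * W
        = (cM (absP1⁻¹ * Pm) * cM Qp) * B + cM (absP1⁻¹ * Pm) * cM Qm := by
          rw [hWdef]; noncomm_ring
      _ = cM (absP1⁻¹ * Qm) := by rw [eC, eD, zero_mul, zero_add]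
  -- the four key identities
  have hF1 : Vᴴ * ((cM P1)⁻¹ * cM Pp) * V = cM Pp := by
    calc Vᴴ * ((cM P1)⁻¹ * cM Pp) * V
        = Vᴴ * (cM (absP1⁻¹ * Pp) * V) := by rw [hNp]; noncomm_ring
      _ = Vᴴ * cM (absP1⁻¹ * Qp) := by rw [hMpV]
      _ = cM Qp * cM (absP1⁻¹ * Qp) + Bᴴ * (cM Qm * cM (absP1⁻¹ * Qp)) := by
          rw [hVH]; noncomm_ring
      _ = cM Pp := by rw [eE, eF, mul_zero, add_zero]
  have hF2 : Wᴴ * ((cM P1)⁻¹ * cM Pm) * W = -(cM Pm) := by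
    calc Wᴴ * ((cM P1)⁻¹ * cM Pm) * W
        = -(Wᴴ * (cM (absP1⁻¹ * Pm) * W)) := by rw [hNm]; noncomm_ring
      _ = -(Wᴴ * cM (absP1⁻¹ * Qm)) := by rw [hMmW]
      _ = -(Bᴴ * (cM Qp * cM (absP1⁻¹ * Qm)) + cM Qm * cM (absP1⁻¹ * Qm)) := by
          rw [hWH]; noncomm_ring
      _ = -(cM Pm) := by rw [eH, eG, mul_zero, zero_add]
  have hF3 : Vᴴ * ((cM P1)⁻¹ * cM Pm) * V = -(Bᴴ * cM Pm * B) := by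
    calc Vᴴ * ((cM P1)⁻¹ * cM Pm) * V
        = -(Vᴴ * (cM (absP1⁻¹ * Pm) * V)) := by rw [hNm]; noncomm_ring
      _ = -(Vᴴ * (cM (absP1⁻¹ * Qm) * B)) := by rw [hMmV]
      _ = -((cM Qp * cM (absP1⁻¹ * Qm)) * B + Bᴴ * (cM Qm * cM (absP1⁻¹ * Qm)) * B) := by
          rw [hVH]; noncomm_ring
      _ = -(Bᴴ * cM Pm * B) := by rw [eH, eG, zero_mul, zero_add]
  have hF4 : Wᴴ * ((cM P1)⁻¹ * cM Pp) * W = Bᴴ * cM Pp * B := by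
    calc Wᴴ * ((cM P1)⁻¹ * cM Pp) * W
        = Wᴴ * (cM (absP1⁻¹ * Pp) * W) := by rw [hNp]; noncomm_ring
      _ = Wᴴ * (cM (absP1⁻¹ * Qp) * B) := by rw [hMpW]
      _ = Bᴴ * (cM Qp * cM (absP1⁻¹ * Qp)) * B + (cM Qm * cM (absP1⁻¹ * Qp)) * B := by
          rw [hWH]; noncomm_ring
      _ = Bᴴ * cM Pp * B := by rw [eE, eF, zero_mul, add_zero]
  -- invertibility of B
  have hdB : IsUnit B.det := by
    have h1 := congrArg Matrix.det hB
    rw [det_mul, det_mul] at h1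
    have hdetP1c : (cM P1).det ≠ 0 := by
      have h0 : (cM P1).det = (P1.det : ℂ) := (RingHom.map_det Complex.ofRealHom P1).symm
      rw [h0]
      exact Complex.ofReal_ne_zero.mpr hP1inv.ne_zero
    have h2 : (Bᴴ.det * B.det) * (cM P1).det = 1 * (cM P1).det := by
      rw [one_mul]; linear_combination h1
    have h3 : Bᴴ.det * B.det = 1 := mul_right_cancel₀ hdetP1c h2
    exact isUnit_iff_exists_inv.mpr ⟨Bᴴ.det, by rw [mul_comm]; exact h3⟩
  have hBiB : B⁻¹ * B = 1 := nonsing_inv_mul _ hdB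
  -- the Euclidean norm of absP1-weighted inner products
  have hSsum : Qp * Qp + Qm * Qm = absP1 := by rw [hQp2', hQm2']; module
  have hSdot : ∀ z : Fin d → ℂ, star z ⬝ᵥ cM absP1 *ᵥ z =
      ((euclNormC (cM Qp *ᵥ z) ^ 2 : ℝ) : ℂ) + ((euclNormC (cM Qm *ᵥ z) ^ 2 : ℝ) : ℂ) := by
    intro z
    rw [← hSsum, cM_add, add_mulVec, dotProduct_add, dot_sq_herm hQp.1, dot_sq_herm hQm.1,
      dot_star_self, dot_star_self]
  -- invertibility of V
  have hVdet : IsUnit V.det := by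
    rcases eq_or_ne V.det 0 with hdet0 | hne
    swap
    · exact isUnit_iff_ne_zero.mpr hne
    exfalso
    obtain ⟨x, hx0, hVx⟩ := (Matrix.exists_mulVec_eq_zero_iff).mpr hdet0
    -- step 1: Qm (Bx) = 0
    have hQmBx : cM Qm *ᵥ (B *ᵥ x) = 0 := by
      have h1 : (cM Qm * V) *ᵥ x = 0 := by rw [← mulVec_mulVec, hVx, mulVec_zero]
      have h2 : cM Qm * V = cM (Qm * Qm) * B := by
        calc cM Qm * V = cM Qm * cM Qp + (cM Qm * cM Qm) * B := by rw [hV]; noncomm_ring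
          _ = cM (Qm * Qm) * B := by
              rw [← cM_mul, ← cM_mul, hQmQp0, cM_zero, zero_add]
      have h3 : cM (Qm * Qm) *ᵥ (B *ᵥ x) = 0 := by
        rw [mulVec_mulVec, ← h2, h1]
      have h4 : star (cM Qm *ᵥ (B *ᵥ x)) ⬝ᵥ (cM Qm *ᵥ (B *ᵥ x)) = 0 := by
        rw [← dot_sq_herm hQm.1, h3, dotProduct_zero]
      exact dot_self_zero h4
    -- step 2: Qp x = 0
    have hQpx : cM Qp *ᵥ x = 0 := by
      have h1 : cM Qp *ᵥ x + cM Qm *ᵥ (B *ᵥ x) = 0 := by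
        rw [mulVec_mulVec]
        rw [hV, add_mulVec] at hVx
        exact hVx
      rwa [hQmBx, add_zero] at h1
    -- step 3: P1 x = -absP1 x and P1 Bx = absP1 Bx
    have hP1x : cM P1 *ᵥ x = -(cM absP1 *ᵥ x) := by
      have h1 : cM (Qp * Qp) *ᵥ x = 0 := by
        rw [cM_mul, ← mulVec_mulVec, hQpx, mulVec_zero]
      rw [hQp2', cM_smul, smul_mulVec, smul_eq_zero] at h1
      rcases h1 with h1 | h1
      · exfalso; revert h1; norm_num
      · rw [cM_add, add_mulVec] at h1
        exact eq_neg_of_add_eq_zero_right h1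
    have hP1Bx : cM P1 *ᵥ (B *ᵥ x) = cM absP1 *ᵥ (B *ᵥ x) := by
      have h1 : cM (Qm * Qm) *ᵥ (B *ᵥ x) = 0 := by
        rw [cM_mul, ← mulVec_mulVec, hQmBx, mulVec_zero]
      rw [hQm2', cM_smul, smul_mulVec, smul_eq_zero] at h1
      rcases h1 with h1 | h1
      · exfalso; revert h1; norm_num
      · rw [cM_sub, sub_mulVec] at h1
        exact (sub_eq_zero.mp h1).symm
    -- step 4: combine with hB
    have hkey : star x ⬝ᵥ cM P1 *ᵥ x = star (B *ᵥ x) ⬝ᵥ cM P1 *ᵥ (B *ᵥ x) := by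
      rw [dot_sandwich, hB]
    rw [hP1x, hP1Bx, dotProduct_neg, hSdot, hSdot] at hkey
    have hre := congrArg Complex.re hkey
    simp only [Complex.neg_re, Complex.add_re, ← Complex.ofReal_pow, Complex.ofReal_re] at hre
    have hQmx : cM Qm *ᵥ x = 0 := by
      apply euclNormC_eq_zero
      nlinarith [euclNormC_nonneg (cM Qp *ᵥ x), euclNormC_nonneg (cM Qm *ᵥ x),
        euclNormC_nonneg (cM Qp *ᵥ (B *ᵥ x)), euclNormC_nonneg (cM Qm *ᵥ (B *ᵥ x)),
        sq_nonneg (euclNormC (cM Qp *ᵥ x)), sq_nonneg (euclNormC (cM Qm *ᵥ x)),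
        sq_nonneg (euclNormC (cM Qp *ᵥ (B *ᵥ x))), sq_nonneg (euclNormC (cM Qm *ᵥ (B *ᵥ x)))]
    have hSx : cM absP1 *ᵥ x = 0 := by
      rw [← hSsum, cM_add, add_mulVec, cM_mul, cM_mul, ← mulVec_mulVec, ← mulVec_mulVec,
        hQpx, hQmx, mulVec_zero, mulVec_zero, add_zero]
    have hx : x = 0 := by
      have h1 : x = cM absP1⁻¹ *ᵥ (cM absP1 *ᵥ x) := by
        rw [mulVec_mulVec, ← cM_mul, hSS, cM_one, one_mulVec]
      rw [hSx, mulVec_zero] at h1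
      exact h1
    exact hx0 hx
  -- main computation
  intro y
  set x := V⁻¹ *ᵥ y with hxdef
  have hyx : V *ᵥ x = y := by
    rw [hxdef, mulVec_mulVec, mul_nonsing_inv _ hVdet, one_mulVec]
  have hUy : U *ᵥ y = W *ᵥ x := by
    rw [hU, hWdef, ← mulVec_mulVec, ← hxdef]
  have hnpy : np2 y = (star x ⬝ᵥ cM Pp *ᵥ x).re := by
    rw [hnp2, ← hyx, dot_sandwich, hF1]
  have hnmUy : nm2 (U *ᵥ y) = (star x ⬝ᵥ cM Pm *ᵥ x).re := by
    rw [hnm2, hUy, dot_sandwich, hF2, neg_mulVec, dotProduct_neg, Complex.neg_re, neg_neg]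
  have hnpUy : np2 (U *ᵥ y) = (star x ⬝ᵥ (Bᴴ * cM Pp * B) *ᵥ x).re := by
    rw [hnp2, hUy, dot_sandwich, hF4]
  have hnmy : nm2 y = (star x ⬝ᵥ (Bᴴ * cM Pm * B) *ᵥ x).re := by
    rw [hnm2, ← hyx, dot_sandwich, hF3, neg_mulVec, dotProduct_neg, Complex.neg_re, neg_neg]
  have hsum1 : np2 y + nm2 (U *ᵥ y) = euclNormC x ^ 2 := by
    rw [hnpy, hnmUy, ← Complex.add_re, ← dotProduct_add, ← add_mulVec, hcPpPm1, one_mulVec,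
      dot_star_self, Complex.ofReal_re]
  have hsum2 : np2 (U *ᵥ y) + nm2 y = euclNormC (B *ᵥ x) ^ 2 := by
    have hBB : Bᴴ * cM Pp * B + Bᴴ * cM Pm * B = Bᴴ * 1 * B := by
      rw [← hcPpPm1]; noncomm_ring
    rw [hnpUy, hnmy, ← Complex.add_re, ← dotProduct_add, ← add_mulVec, hBB,
      ← dot_sandwich, one_mulVec, dot_star_self, Complex.ofReal_re]
  have hy1 : euclNormC y ≤ specNormC V * euclNormC x := by
    rw [← hyx]; exact mulVec_norm_le _ _
  have hx2 : euclNormC x ≤ specNormC B⁻¹ * euclNormC (B *ᵥ x) := by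
    have h1 : B⁻¹ *ᵥ (B *ᵥ x) = x := by rw [mulVec_mulVec, hBiB, one_mulVec]
    calc euclNormC x = euclNormC (B⁻¹ *ᵥ (B *ᵥ x)) := by rw [h1]
      _ ≤ specNormC B⁻¹ * euclNormC (B *ᵥ x) := mulVec_norm_le _ _
  constructor
  · rw [hsum1]
    calc euclNormC y ^ 2 ≤ (specNormC V * euclNormC x) ^ 2 :=
        pow_le_pow_left₀ (euclNormC_nonneg _) hy1 2
      _ = specNormC V ^ 2 * euclNormC x ^ 2 := by ring
  · rw [hsum2]
    have h3 : euclNormC y ≤ specNormC B⁻¹ * specNormC V * euclNormC (B *ᵥ x) := by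
      calc euclNormC y ≤ specNormC V * euclNormC x := hy1
        _ ≤ specNormC V * (specNormC B⁻¹ * euclNormC (B *ᵥ x)) :=
            mul_le_mul_of_nonneg_left hx2 (specNormC_nonneg _)
        _ = specNormC B⁻¹ * specNormC V * euclNormC (B *ᵥ x) := by ring
    calc euclNormC y ^ 2 ≤ (specNormC B⁻¹ * specNormC V * euclNormC (B *ᵥ x)) ^ 2 :=
        pow_le_pow_left₀ (euclNormC_nonneg _) h3 2
      _ = specNormC B⁻¹ ^ 2 * specNormC V ^ 2 * euclNormC (B *ᵥ x) ^ 2 := by ring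
end
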